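/- (Polynomial lemma on central sets) Let 0 < ε ≪ 1, let S be a central set of width w ≲ 1, and let P be a polynomial of degree at most D on ℝ. Then there exists a subset S' ⊂ S with |S'| ≳ |S| such that |P(x)| ≳ C_D ‖P‖_{L^∞([−w,w])} for all x ∈ S', where the constants depend only on D and ε. In particular, taking S = [−w,w], one has ‖P‖_{L^∞([−w,w])} ∼ w^{-1} ∫_{[−w,w]} |P(x)| dx. -/

import Mathlib

open MeasureTheory Set Metric
open scoped ENNReal NNReal

noncomputable section

/-- `E n` is Euclidean space `ℝ^n`. -/
abbrev E (n : ℕ) : Type := EuclideanSpace ℝ (Fin n)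

/-- The Lie bracket `[X,Y]` of two vector fields on `ℝ^n`. -/
def lieB {n : ℕ} (X Y : E n → E n) : E n → E n :=
  fun x => fderiv ℝ Y x (X x) - fderiv ℝ X x (Y x)

/-- The iterated Lie bracket `X_w` associated to a (nonempty) word `w`.
Words are represented as lists with the *last* letter at the head, so that
`X_{(w,j)} = [X_w, X_j]` corresponds to `XW X (j :: w) = [XW X w, X j]`. -/
def XW {n k : ℕ} (X : Fin k → E n → E n) : List (Fin k) → E n → E n
  | [] => fun _ => 0
  | [j] => X j
  | j :: w => lieB (XW X w) (X j)

/-- The degree of an `n`-tuple of words `I`: `degI I j` counts the total number of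
occurrences of the letter `j`. -/
def degI {n k : ℕ} (I : Fin n → List (Fin k)) (j : Fin k) : ℕ := ∑ i, (I i).count j

/-- `λ_I(x) = det (X_{w_1}(x), …, X_{w_n}(x))`. -/
def lam {n k : ℕ} (X : Fin k → E n → E n) (I : Fin n → List (Fin k)) (x : E n) : ℝ :=
  Matrix.det (Matrix.of fun i i' => XW X (I i) x i')

/-- `δ^β = ∏_j δ_j^{β_j}`. -/
def dpow {k : ℕ} (δ : Fin k → ℝ) (β : Fin k → ℕ) : ℝ := ∏ j, δ j ^ β j

/-- Membership in the finite collection `𝐈` of `n`-tuples of (nonempty) words whose degrees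
are bounded by `D` in each component. -/
def inIset {n k : ℕ} (D : ℝ) (I : Fin n → List (Fin k)) : Prop :=
  (∀ i, I i ≠ []) ∧ ∀ j, (degI I j : ℝ) ≤ D

/-- the total degree `d` of an `n`-tuple of words -/
def degTot {n k : ℕ} (I : Fin n → List (Fin k)) : ℝ := ∑ j, (degI I j : ℝ)

/-- `|Λ_δ(x)|`: the (sup-norm) size of the vector `(δ^{deg I} λ_I(x))_{I ∈ 𝐈}`,
where `𝐈` is the set of `n`-tuples of words of degree at most `D` in each letter. -/
def LamSup {n k : ℕ} (X : Fin k → E n → E n) (D : ℝ) (δ : Fin k → ℝ) (x : E n) : ℝ :=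
  sSup {r | ∃ I : Fin n → List (Fin k), inIset D I ∧ r = dpow δ (degI I) * |lam X I x|}

/-- The Newton polytope `P` of the vector fields `X_1,…,X_k`: the closed convex hull of
`{b : b ≥ deg I for some I with λ_I(0) ≠ 0}`. -/
def newtonP (n k : ℕ) (X : Fin k → E n → E n) : Set (Fin k → ℝ) :=
  closure (convexHull ℝ {b : Fin k → ℝ | ∃ I : Fin n → List (Fin k),
    (∀ i, I i ≠ []) ∧ lam X I 0 ≠ 0 ∧ ∀ j, (degI I j : ℝ) ≤ b j})

/-- `b(p)_i = p_i⁻¹ / (∑_j p_j⁻¹ − 1)`. -/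
def bOf {k : ℕ} (p : Fin k → ℝ≥0∞) : Fin k → ℝ :=
  fun i => ((p i)⁻¹).toReal / ((∑ j, ((p j)⁻¹).toReal) - 1)

/-- `φ j` is the flow of the vector field `X j`: `φ j t x = e^{tX_j}(x)`. -/
def IsFlowOf {n k : ℕ} (X : Fin k → E n → E n) (φ : Fin k → ℝ → E n → E n) : Prop :=
  (∀ j x, φ j 0 x = x) ∧ ∀ j x t, HasDerivAt (fun s => φ j s x) (X j (φ j t x)) t

/-- The multi-parameter Carnot–Carathéodory ball `B(x; δ_1,…,δ_k)`: the closure of the set of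
points reachable from `x` by flowing along the vector fields `δ_{j_i} X_{j_i}` for total time
at most 1. -/
def ccBall {n k : ℕ} (φ : Fin k → ℝ → E n → E n) (δ : Fin k → ℝ) (x : E n) : Set (E n) :=
  closure {y | ∃ L : List (Fin k × ℝ), (L.map fun q => |q.2|).sum ≤ 1 ∧
    y = L.foldl (fun z q => φ q.1 (q.2 * δ q.1) z) x}

/-- The restricted ball `B_𝐣(x;δ)` for a sequence `𝐣 ∈ {1,…,k}^n`. -/
def ccBallJ {n k : ℕ} (φ : Fin k → ℝ → E n → E n) (δ : Fin k → ℝ) (js : Fin n → Fin k)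
    (x : E n) : Set (E n) :=
  closure {y | ∃ t : Fin n → ℝ, (∀ i, |t i| ≤ 1) ∧
    y = (List.finRange n).foldl (fun z i => φ (js i) (t i * δ (js i)) z) x}

/-- A central set of width `w` (with centrality constant `A`): a subset of `[-w,w]` of positive
measure meeting every interval `I` in measure `≤ A (|I|/w)^ε |S|`. -/
def IsCentral (ε A w : ℝ) (S : Set ℝ) : Prop :=
  S ⊆ Set.Icc (-w) w ∧ MeasurableSet S ∧ 0 < volume S ∧
  ∀ a b : ℝ, a ≤ b →
    (volume (Set.Icc a b ∩ S)).toReal ≤ A * ((b - a) / w) ^ ε * (volume S).toReal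

/-- The sup norm `‖P‖_{L^∞([-w,w])}` of a one-variable polynomial. -/
def polySup (P : Polynomial ℝ) (w : ℝ) : ℝ :=
  sSup ((fun y => |P.eval y|) '' Set.Icc (-w) w)

/-- Greedy covering: if a bounded-below set of reals admits no `(m+1)`-chain of
`s`-separated points in its closure, it is covered by `m` intervals of length `s`. -/
lemma cover_of_no_chain (s : ℝ) (hs : 0 < s) :
    ∀ (m : ℕ) (T : Set ℝ), BddBelow T →
      (¬ ∃ f : Fin (m + 1) → ℝ, (∀ i, f i ∈ closure T) ∧
        ∀ i j : Fin (m + 1), (i : ℕ) < (j : ℕ) → f i + s ≤ f j) →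
      ∃ g : Fin m → ℝ, T ⊆ ⋃ i, Icc (g i) (g i + s) := by
  intro m
  induction m with
  | zero =>
    intro T _ hch
    refine ⟨Fin.elim0, fun x hx => ?_⟩
    exact absurd ⟨fun _ => x, fun _ => subset_closure hx, fun i j hij => by omega⟩ hch
  | succ m ih =>
    intro T hbdd hch
    rcases T.eq_empty_or_nonempty with rfl | hne
    · exact ⟨fun _ => 0, by simp⟩
    set x0 := sInf T with hx0def
    have hx0 : x0 ∈ closure T := (isGLB_csInf hne hbdd).mem_closure hne
    set T' := T ∩ Ici (x0 + s) with hT'def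
    have hT'T : T' ⊆ T := inter_subset_left
    have hclT' : closure T' ⊆ Ici (x0 + s) :=
      isClosed_Ici.closure_subset_iff.mpr inter_subset_right
    have hch' : ¬ ∃ f : Fin (m + 1) → ℝ, (∀ i, f i ∈ closure T') ∧
        ∀ i j : Fin (m + 1), (i : ℕ) < (j : ℕ) → f i + s ≤ f j := by
      rintro ⟨f, hfc, hfs⟩
      refine hch ⟨Fin.cons x0 f, ?_, ?_⟩
      · intro i
        refine Fin.cases ?_ (fun i' => ?_) i
        · simpa using hx0
        · simpa using closure_mono hT'T (hfc i')
      · intro i j hij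
        have hj0 : j ≠ 0 := by
          intro h; rw [h] at hij; simp at hij
        obtain ⟨j', rfl⟩ := Fin.eq_succ_of_ne_zero hj0
        rcases Fin.eq_zero_or_eq_succ i with rfl | ⟨i', rfl⟩
        · simpa using hclT' (hfc j')
        · simp only [Fin.cons_succ]
          exact hfs i' j' (by simpa [Fin.val_succ] using hij)
    obtain ⟨g', hg'⟩ := ih T' (hbdd.mono hT'T) hch'
    refine ⟨Fin.cons x0 g', fun y hy => ?_⟩
    have hy0 : x0 ≤ y := csInf_le hbdd hy
    by_cases hys : y ≤ x0 + s
    · exact Set.mem_iUnion.mpr ⟨0, by simpa using ⟨hy0, hys⟩⟩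
    · have : y ∈ T' := ⟨hy, le_of_lt (lt_of_not_ge hys)⟩
      obtain ⟨i, hi⟩ := Set.mem_iUnion.mp (hg' this)
      exact Set.mem_iUnion.mpr ⟨i.succ, by simpa using hi⟩

lemma lagrange_bound {D : ℕ} (P : Polynomial ℝ) (hP : P.natDegree ≤ D)
    (w σ t : ℝ) (hw : 0 < w) (hσ : 0 < σ) (x : Fin (D + 1) → ℝ)
    (hmem : ∀ i, x i ∈ Icc (-w) w)
    (hsep : ∀ i j : Fin (D + 1), (i : ℕ) < (j : ℕ) → x i + σ * w ≤ x j)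
    (hval : ∀ i, |P.eval (x i)| ≤ t)
    (y : ℝ) (hy : y ∈ Icc (-w) w) :
    |P.eval y| ≤ (D + 1) * (2 / σ) ^ D * t := by
  have ht : 0 ≤ t := le_trans (abs_nonneg _) (hval 0)
  have hxmono : StrictMono x := by
    have : ∀ i j : Fin (D+1), (i:ℕ) < (j:ℕ) → x i < x j := fun i j hij =>
      lt_of_lt_of_le (by nlinarith [mul_pos hσ hw]) (hsep i j hij)
    intro i j hij; exact this i j hij
  have hinj : Set.InjOn x (Finset.univ : Finset (Fin (D+1))) :=
    fun a _ b _ hab => hxmono.injective hab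
  have hdeg : P.degree < (Finset.univ : Finset (Fin (D+1))).card := by
    rw [Finset.card_univ, Fintype.card_fin]
    exact lt_of_le_of_lt (Polynomial.degree_le_natDegree)
      (by exact_mod_cast Nat.lt_succ_of_le hP)
  have hgap : ∀ i j : Fin (D+1), i ≠ j → σ * w ≤ |x i - x j| := by
    intro i j hij
    rcases lt_or_gt_of_ne (fun h : (i:ℕ) = (j:ℕ) => hij (Fin.ext h)) with h | h
    · rw [abs_sub_comm, abs_of_nonneg (by linarith [hsep i j h, mul_pos hσ hw])]
      linarith [hsep i j h]
    · rw [abs_of_nonneg (by linarith [hsep j i h, mul_pos hσ hw])]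
      linarith [hsep j i h]
  -- basis bound
  have hbasis : ∀ i : Fin (D+1), |(Lagrange.basis Finset.univ x i).eval y| ≤ (2 / σ) ^ D := by
    intro i
    rw [Lagrange.basis, Polynomial.eval_prod, Finset.abs_prod]
    have hcard : (Finset.univ.erase i).card = D := by
      rw [Finset.card_erase_of_mem (Finset.mem_univ i), Finset.card_univ, Fintype.card_fin]
      omega
    calc ∏ j ∈ Finset.univ.erase i, |(Lagrange.basisDivisor (x i) (x j)).eval y|
        ≤ ∏ j ∈ Finset.univ.erase i, (2 / σ) := by
          refine Finset.prod_le_prod (fun j _ => abs_nonneg _) (fun j hj => ?_)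
          have hji : j ≠ i := (Finset.mem_erase.mp hj).1
          have h1 : |y - x j| ≤ 2 * w := by
            have := hmem j; have h2 := hy
            simp only [Set.mem_Icc] at this h2
            rw [abs_le]; constructor <;> linarith
          have h2 : σ * w ≤ |x i - x j| := hgap i j (Ne.symm hji)
          have h3 : (0:ℝ) < |x i - x j| := lt_of_lt_of_le (mul_pos hσ hw) h2
          have : |(Lagrange.basisDivisor (x i) (x j)).eval y|
              = |y - x j| / |x i - x j| := by
            simp [Lagrange.basisDivisor, abs_mul, abs_inv, div_eq_inv_mul]
          rw [this]
          rw [div_le_div_iff₀ h3 hσ]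
          calc |y - x j| * σ ≤ 2 * w * σ := by
                exact mul_le_mul_of_nonneg_right h1 hσ.le
            _ ≤ 2 * |x i - x j| := by nlinarith
      _ = (2 / σ) ^ D := by rw [Finset.prod_const, hcard]
  have hrep := Lagrange.eq_interpolate (f := P) hinj hdeg
  calc |P.eval y| = |∑ i, P.eval (x i) * (Lagrange.basis Finset.univ x i).eval y| := by
        conv_lhs => rw [hrep]
        rw [Lagrange.interpolate_apply, Polynomial.eval_finset_sum]
        simp
    _ ≤ ∑ i, |P.eval (x i) * (Lagrange.basis Finset.univ x i).eval y| :=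
        Finset.abs_sum_le_sum_abs _ _
    _ ≤ ∑ _i : Fin (D+1), t * (2/σ)^D := by
        refine Finset.sum_le_sum fun i _ => ?_
        rw [abs_mul]
        exact mul_le_mul (hval i) (hbasis i) (abs_nonneg _) ht
    _ = (D+1) * (2/σ)^D * t := by
        rw [Finset.sum_const, Finset.card_univ, Fintype.card_fin]
        push_cast; ring


lemma polySup_bddAbove (P : Polynomial ℝ) (w : ℝ) :
    BddAbove ((fun y => |P.eval y|) '' Set.Icc (-w) w) :=
  (isCompact_Icc.image (continuous_abs.comp P.continuous)).bddAbove

lemma le_polySup (P : Polynomial ℝ) {w y : ℝ} (hy : y ∈ Set.Icc (-w) w) :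
    |P.eval y| ≤ polySup P w :=
  le_csSup (polySup_bddAbove P w) ⟨y, hy, rfl⟩

lemma polySup_nonneg (P : Polynomial ℝ) {w : ℝ} (hw : 0 ≤ w) : 0 ≤ polySup P w :=
  (abs_nonneg _).trans (le_polySup P ⟨neg_nonpos.2 hw, hw⟩)

lemma polySup_le (P : Polynomial ℝ) {w b : ℝ} (hw : 0 ≤ w)
    (h : ∀ y ∈ Set.Icc (-w) w, |P.eval y| ≤ b) : polySup P w ≤ b :=
  csSup_le ((Set.nonempty_Icc.2 (by linarith)).image _)
    (by rintro r ⟨y, hy, rfl⟩; exact h y hy)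

lemma icc_central (ε w : ℝ) (hε : 0 < ε) (hε1 : ε ≤ 1) (hw : 0 < w) :
    IsCentral ε 1 w (Set.Icc (-w) w) := by
  refine ⟨subset_rfl, measurableSet_Icc, ?_, ?_⟩
  · rw [Real.volume_Icc]
    exact ENNReal.ofReal_pos.mpr (by linarith)
  · intro a b hab
    have hvol : (volume (Set.Icc (-w) w)).toReal = 2 * w := by
      rw [Real.volume_Icc, ENNReal.toReal_ofReal (by linarith)]; ring
    have h1 : (volume (Set.Icc a b ∩ Set.Icc (-w) w)).toReal ≤ b - a := by
      refine le_trans (ENNReal.toReal_mono (by simp) (measure_mono Set.inter_subset_left)) ?_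
      rw [Real.volume_Icc, ENNReal.toReal_ofReal (by linarith)]
    have h2 : (volume (Set.Icc a b ∩ Set.Icc (-w) w)).toReal ≤ 2 * w := by
      refine le_trans (ENNReal.toReal_mono (by simp) (measure_mono Set.inter_subset_right)) ?_
      rw [Real.volume_Icc, ENNReal.toReal_ofReal (by linarith)]; linarith
    rw [hvol]
    rcases le_or_gt (b - a) w with h | h
    · have hr0 : 0 ≤ (b - a) / w := div_nonneg (by linarith) hw.le
      have hr1 : (b - a) / w ≤ 1 := by rw [div_le_one hw]; linarith
      have hkey : (b - a) / w ≤ ((b - a) / w) ^ ε := by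
        rcases eq_or_lt_of_le hr0 with h0 | h0
        · rw [← h0]; exact Real.rpow_nonneg le_rfl ε
        · calc (b - a) / w = ((b - a) / w) ^ (1 : ℝ) := (Real.rpow_one _).symm
            _ ≤ ((b - a) / w) ^ ε := Real.rpow_le_rpow_of_exponent_ge h0 hr1 hε1
      have : (b - a) / w * (2 * w) = 2 * (b - a) := by field_simp
      nlinarith [hw, hab]
    · have hr1 : (1 : ℝ) ≤ (b - a) / w := by rw [le_div_iff₀ hw]; linarith
      have hkey : (1 : ℝ) ≤ ((b - a) / w) ^ ε :=
        Real.one_le_rpow hr1 hε.le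
      nlinarith [hw]

lemma core_lemma (ε A : ℝ) (hε : 0 < ε) (hε1 : ε ≤ 1) (hA : 0 < A) (D : ℕ) :
    ∃ C1 : ℝ, 0 < C1 ∧ ∀ w : ℝ, 0 < w → ∀ S : Set ℝ, IsCentral ε A w S →
      ∀ P : Polynomial ℝ, P.natDegree ≤ D →
        ∃ S' : Set ℝ, S' ⊆ S ∧ MeasurableSet S' ∧
          (1/2) * (volume S).toReal ≤ (volume S').toReal ∧
          ∀ x ∈ S', C1 * polySup P w ≤ |P.eval x| := by
  have hD1 : (0:ℝ) < (D:ℝ) + 1 := by positivity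
  have hbase : (0:ℝ) < 1 / (2 * ((D:ℝ) + 1) * A) := by positivity
  set σ : ℝ := min ((1 / (2 * ((D:ℝ) + 1) * A)) ^ (1/ε)) 1 with hσdef
  have hσpos : 0 < σ := lt_min (Real.rpow_pos_of_pos hbase _) one_pos
  have hσkey : (D : ℝ) * (A * σ ^ ε) ≤ 1 / 2 := by
    have h2 : ((1 / (2 * ((D:ℝ) + 1) * A)) ^ (1/ε)) ^ ε = 1 / (2 * ((D:ℝ) + 1) * A) := by
      rw [← Real.rpow_mul hbase.le, one_div_mul_cancel hε.ne', Real.rpow_one]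
    have h1 : σ ^ ε ≤ 1 / (2 * ((D:ℝ) + 1) * A) := by
      rw [← h2]; exact Real.rpow_le_rpow hσpos.le (min_le_left _ _) hε.le
    have h3 : (D:ℝ) * (A * σ ^ ε) ≤ (D:ℝ) * (A * (1 / (2 * ((D:ℝ) + 1) * A))) :=
      mul_le_mul_of_nonneg_left (mul_le_mul_of_nonneg_left h1 hA.le) (Nat.cast_nonneg D)
    have h4 : (D:ℝ) * (A * (1 / (2 * ((D:ℝ) + 1) * A))) = (D:ℝ) / (2 * ((D:ℝ) + 1)) := by
      field_simp
    rw [h4] at h3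
    refine le_trans h3 ?_
    rw [div_le_div_iff₀ (by positivity) two_pos]
    linarith
  set C1 : ℝ := 1 / (2 * ((D:ℝ) + 1) * (2/σ)^D) with hC1def
  have hC1pos : 0 < C1 := by positivity
  refine ⟨C1, hC1pos, ?_⟩
  intro w hw S hS P hP
  obtain ⟨hSsub, hSmeas, hSpos, hScen⟩ := hS
  set M := polySup P w with hMdef
  have hMnn : 0 ≤ M := polySup_nonneg P hw.le
  set t := C1 * M with htdef
  set T : Set ℝ := {x | x ∈ Set.Icc (-w) w ∧ |P.eval x| < t} with hTdef
  have hTsub : T ⊆ Set.Icc (-w) w := fun x hx => hx.1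
  have hclosT : closure T ⊆ Set.Icc (-w) w := isClosed_Icc.closure_subset_iff.mpr hTsub
  have hclosT2 : closure T ⊆ {x | |P.eval x| ≤ t} := by
    refine (IsClosed.closure_subset_iff ?_).mpr (fun x hx => hx.2.le)
    exact isClosed_le (continuous_abs.comp P.continuous) continuous_const
  have hch : ¬ ∃ f : Fin (D+1) → ℝ, (∀ i, f i ∈ closure T) ∧
      ∀ i j : Fin (D+1), (i:ℕ) < (j:ℕ) → f i + σ * w ≤ f j := by
    rintro ⟨f, hfc, hfs⟩
    have hMle : M ≤ ((D:ℝ) + 1) * (2/σ)^D * t :=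
      polySup_le P hw.le (fun y hy => lagrange_bound P hP w σ t hw hσpos f
        (fun i => hclosT (hfc i)) hfs (fun i => hclosT2 (hfc i)) y hy)
    have heq : ((D:ℝ) + 1) * (2/σ)^D * t = (1/2) * M := by
      rw [htdef, hC1def]
      have h1 : (0:ℝ) < (2/σ)^D := by positivity
      field_simp
    have hM0 : M = 0 := le_antisymm (by rw [heq] at hMle; linarith) hMnn
    have hTe : T = ∅ := by
      ext x
      simp only [hTdef, Set.mem_setOf_eq, Set.mem_empty_iff_false, iff_false, not_and, not_lt]
      intro _
      rw [htdef, hM0, mul_zero]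
      exact abs_nonneg _
    have := hfc 0
    rw [hTe, closure_empty] at this
    exact this
  obtain ⟨g, hg⟩ := cover_of_no_chain (σ * w) (mul_pos hσpos hw) D T
    (BddBelow.mono hTsub bddBelow_Icc) hch
  set S' : Set ℝ := S ∩ {x | t ≤ |P.eval x|} with hS'def
  have hS'sub : S' ⊆ S := Set.inter_subset_left
  have hS'meas : MeasurableSet S' := hSmeas.inter
    ((isClosed_le continuous_const (continuous_abs.comp P.continuous)).measurableSet)
  have hSfin : volume S ≠ ⊤ := by
    refine ne_top_of_le_ne_top ?_ (measure_mono hSsub)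
    rw [Real.volume_Icc]; exact ENNReal.ofReal_ne_top
  have hcover : S ⊆ S' ∪ (S ∩ T) := by
    intro x hx
    by_cases h : t ≤ |P.eval x|
    · exact Or.inl ⟨hx, h⟩
    · exact Or.inr ⟨hx, hSsub hx, lt_of_not_ge h⟩
  have hterm : ∀ i : Fin D, (volume (Set.Icc (g i) (g i + σ*w) ∩ S)).toReal
      ≤ A * σ ^ ε * (volume S).toReal := by
    intro i
    have h := hScen (g i) (g i + σ*w) (by nlinarith)
    have hrw : (g i + σ*w - g i) / w = σ := by field_simp; ring
    rwa [hrw] at h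
  have hSTle : (volume (S ∩ T)).toReal ≤ (1/2) * (volume S).toReal := by
    have h1 : volume (S ∩ T) ≤ ∑ i : Fin D, volume (Set.Icc (g i) (g i + σ*w) ∩ S) := by
      refine le_trans (measure_mono ?_) (le_trans (measure_iUnion_le (fun i : Fin D => Set.Icc (g i) (g i + σ*w) ∩ S)) ?_)
      · intro x hx
        obtain ⟨i, hi⟩ := Set.mem_iUnion.mp (hg hx.2)
        exact Set.mem_iUnion.mpr ⟨i, hi, hx.1⟩
      · rw [tsum_fintype]
    have hfin : ∀ i : Fin D, volume (Set.Icc (g i) (g i + σ*w) ∩ S) ≠ ⊤ :=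
      fun i => ne_top_of_le_ne_top hSfin (measure_mono Set.inter_subset_right)
    calc (volume (S ∩ T)).toReal
        ≤ (∑ i : Fin D, volume (Set.Icc (g i) (g i + σ*w) ∩ S)).toReal :=
          ENNReal.toReal_mono (ENNReal.sum_ne_top.mpr (fun i _ => hfin i)) h1
      _ = ∑ i : Fin D, (volume (Set.Icc (g i) (g i + σ*w) ∩ S)).toReal :=
          ENNReal.toReal_sum (fun i _ => hfin i)
      _ ≤ ∑ _i : Fin D, A * σ ^ ε * (volume S).toReal :=
          Finset.sum_le_sum (fun i _ => hterm i)
      _ = (D:ℝ) * (A * σ ^ ε) * (volume S).toReal := by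
          rw [Finset.sum_const, Finset.card_univ, Fintype.card_fin]
          push_cast; ring
      _ ≤ (1/2) * (volume S).toReal := by
          have := ENNReal.toReal_nonneg (a := volume S)
          nlinarith [hσkey]
  have final : (1/2) * (volume S).toReal ≤ (volume S').toReal := by
    have hS'fin : volume S' ≠ ⊤ := ne_top_of_le_ne_top hSfin (measure_mono hS'sub)
    have hSTfin : volume (S ∩ T) ≠ ⊤ :=
      ne_top_of_le_ne_top hSfin (measure_mono Set.inter_subset_left)
    have h3 : volume S ≤ volume S' + volume (S ∩ T) :=
      le_trans (measure_mono hcover) (measure_union_le _ _)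
    have h4 : (volume S).toReal ≤ (volume S').toReal + (volume (S ∩ T)).toReal := by
      calc (volume S).toReal ≤ (volume S' + volume (S ∩ T)).toReal :=
            ENNReal.toReal_mono (ENNReal.add_ne_top.mpr ⟨hS'fin, hSTfin⟩) h3
        _ = _ := ENNReal.toReal_add hS'fin hSTfin
    linarith
  exact ⟨S', hS'sub, hS'meas, final, fun x hx => hx.2⟩



/-- **polynomial lemma on central sets.** If `S` is a central set of width
`w ≲ 1` and `P` is a polynomial of degree at most `D`, then `|P| ≳_D ‖P‖_{L^∞([-w,w])}` on a
subset `S' ⊆ S` of measure `≳ |S|`.  In particular, taking `S = [-w,w]`, one has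
`‖P‖_{L^∞([-w,w])} ∼ w⁻¹ ∫_{[-w,w]} |P|`. -/
theorem statement18 :
    ∃ ε0 : ℝ, 0 < ε0 ∧ ∀ ε : ℝ, 0 < ε → ε < ε0 → ∀ A : ℝ, 0 < A → ∀ D : ℕ,
      ∃ c CD : ℝ, 0 < c ∧ 0 < CD ∧
        (∀ w : ℝ, 0 < w → w ≤ 1 → ∀ S : Set ℝ, IsCentral ε A w S →
          ∀ P : Polynomial ℝ, P.natDegree ≤ D →
            ∃ S' : Set ℝ, S' ⊆ S ∧ MeasurableSet S' ∧
              c * (volume S).toReal ≤ (volume S').toReal ∧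
              ∀ x ∈ S', CD * polySup P w ≤ |P.eval x|) ∧
        (∀ w : ℝ, 0 < w → w ≤ 1 → ∀ P : Polynomial ℝ, P.natDegree ≤ D →
          CD * polySup P w ≤ w⁻¹ * ∫ x in Set.Icc (-w) w, |P.eval x| ∧
          w⁻¹ * ∫ x in Set.Icc (-w) w, |P.eval x| ≤ CD⁻¹ * polySup P w) := by

  refine ⟨1, one_pos, ?_⟩
  intro ε hε hε1 A hA D
  obtain ⟨CA, hCA, hcoreA⟩ := core_lemma ε A hε hε1.le hA D
  obtain ⟨C1, hC1, hcore1⟩ := core_lemma ε 1 hε hε1.le one_pos D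
  set CD := min (min CA C1) (1/2) with hCDdef
  have hCDpos : 0 < CD := lt_min (lt_min hCA hC1) (by norm_num)
  refine ⟨1/2, CD, by norm_num, hCDpos, ?_, ?_⟩
  · intro w hw _ S hS P hP
    obtain ⟨S', h1, h2, h3, h4⟩ := hcoreA w hw S hS P hP
    refine ⟨S', h1, h2, h3, fun x hx => ?_⟩
    have hM := polySup_nonneg P hw.le
    have h5 := h4 x hx
    have hle : CD ≤ CA := le_trans (min_le_left _ _) (min_le_left _ _)
    nlinarith
  · intro w hw _ P hP
    have hIcc := icc_central ε w hε hε1.le hw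
    obtain ⟨S', h1, h2, h3, h4⟩ := hcore1 w hw _ hIcc P hP
    have hM := polySup_nonneg P hw.le
    have hvol : (volume (Set.Icc (-w) w)).toReal = 2 * w := by
      rw [Real.volume_Icc, ENNReal.toReal_ofReal (by linarith)]; ring
    have hS'fin : volume S' ≠ ⊤ := ne_top_of_le_ne_top
      (by rw [Real.volume_Icc]; exact ENNReal.ofReal_ne_top) (measure_mono h1)
    have hint : IntegrableOn (fun x => |P.eval x|) (Set.Icc (-w) w) :=
      (continuous_abs.comp P.continuous).integrableOn_Icc
    have hintS' : IntegrableOn (fun x => |P.eval x|) S' := hint.mono_set h1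
    have hlow : C1 * polySup P w * w ≤ ∫ x in Set.Icc (-w) w, |P.eval x| := by
      have e1 : (C1 * polySup P w) * (volume S').toReal ≤ ∫ x in S', |P.eval x| :=
        setIntegral_ge_of_const_le_real h2 hS'fin h4 hintS'
      have e2 : ∫ x in S', |P.eval x| ≤ ∫ x in Set.Icc (-w) w, |P.eval x| :=
        setIntegral_mono_set hint (Filter.Eventually.of_forall fun x => abs_nonneg _)
          (HasSubset.Subset.eventuallyLE h1)
      have e3 : w ≤ (volume S').toReal := by rw [hvol] at h3; linarith
      nlinarith [mul_le_mul_of_nonneg_left e3 (mul_nonneg hC1.le hM)]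
    have hup : ∫ x in Set.Icc (-w) w, |P.eval x| ≤ polySup P w * (2 * w) := by
      have h5 := setIntegral_mono_on hint
        (integrableOn_const (by rw [Real.volume_Icc]; exact ENNReal.ofReal_ne_top))
        measurableSet_Icc (fun x hx => le_polySup P hx)
      rwa [setIntegral_const, measureReal_def, hvol, smul_eq_mul, mul_comm] at h5
    constructor
    · have hCDle : CD ≤ C1 := le_trans (min_le_left _ _) (min_le_right _ _)
      have h6 := mul_le_mul_of_nonneg_left hlow (inv_nonneg.mpr hw.le)
      have h7 : w⁻¹ * (C1 * polySup P w * w) = C1 * polySup P w := by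
        field_simp
      rw [h7] at h6
      nlinarith
    · have hCDle : CD ≤ 1/2 := min_le_right _ _
      have h2le : (2:ℝ) ≤ CD⁻¹ := by
        have := inv_anti₀ hCDpos hCDle
        norm_num at this
        linarith
      have h6 := mul_le_mul_of_nonneg_left hup (inv_nonneg.mpr hw.le)
      have h7 : w⁻¹ * (polySup P w * (2 * w)) = 2 * polySup P w := by
        field_simp
      rw [h7] at h6
      nlinarith

end
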